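/- arXiv:2406.09857 — 3 statements merged into one kernel-verified Lean document; each statement's English description precedes it below -/
import Mathlib

section
/- Let E ⊆ ℕ^k be finite, with projection onto the first j coordinates equal to X_1 × ⋯ × X_j where each |X_i| > d for a fixed d ≥ 0. Then for every 0 ≤ i < j, (d+1) · N_i(E) ≤ N_{i+1}(E). -/
/-- Projection of a tuple onto its first `i` coordinates. -/
def projF (k i : ℕ) (v : Fin k → ℕ) : Fin i → ℕ :=
  fun m => if h : m.1 < k then v ⟨m.1, h⟩ else 0

/-- `N_i(E)`: the number of distinct projections of elements of `E`
onto their first `i` coordinates (with `N_0(E) = 1` for nonempty `E`). -/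
def NFirst (k i : ℕ) (E : Finset (Fin k → ℕ)) : ℕ :=
  (E.image (projF k i)).card

/-- if the projection of `E` onto the first `j` coordinates is a full
Cartesian product `X_1 × ⋯ × X_j` with `|X_i| > d` for all `i`, then
`(d+1) · N_i(E) ≤ N_{i+1}(E)` for all `0 ≤ i < j`. -/
theorem csf_proj_count_growth_of_product_grid
    (k j d : ℕ) (hj : j ≤ k) (E : Finset (Fin k → ℕ))
    (X : Fin j → Finset ℕ)
    (hproj : E.image (projF k j) = Fintype.piFinset X)
    (hX : ∀ m : Fin j, d < (X m).card) :
    ∀ i : ℕ, i < j → (d + 1) * NFirst k i E ≤ NFirst k (i + 1) E := by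
  intro i hij
  have hik : i < k := lt_of_lt_of_le hij hj
  set S := E.image (projF k (i + 1)) with hS
  set T := E.image (projF k i) with hT
  -- truncation map
  set f : (Fin (i + 1) → ℕ) → (Fin i → ℕ) :=
    fun q m => q ⟨m.1, Nat.lt_succ_of_lt m.2⟩ with hf
  have hmaps : ∀ q ∈ S, f q ∈ T := by
    intro q hq
    rw [hS, Finset.mem_image] at hq
    obtain ⟨v, hv, rfl⟩ := hq
    rw [hT, Finset.mem_image]
    refine ⟨v, hv, ?_⟩
    funext m
    simp [hf, projF]
  have key : ∀ p ∈ T, d + 1 ≤ (S.filter fun q => f q = p).card := by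
    intro p hp
    rw [hT, Finset.mem_image] at hp
    obtain ⟨v, hv, rfl⟩ := hp
    -- extension map
    set g : ℕ → (Fin (i + 1) → ℕ) :=
      fun x m => if h : m.1 < i then v ⟨m.1, lt_trans h hik⟩ else x with hg
    have hginj : Set.InjOn g (X ⟨i, hij⟩) := by
      intro x _ y _ hxy
      have := congrFun hxy ⟨i, Nat.lt_succ_self i⟩
      simpa [hg] using this
    have hgmem : ∀ x ∈ X ⟨i, hij⟩, g x ∈ S.filter fun q => f q = projF k i v := by
      intro x hx
      -- construct the modified tuple in the product grid
      have hv' : projF k j v ∈ Fintype.piFinset X := by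
        rw [← hproj]; exact Finset.mem_image_of_mem _ hv
      have hu : Function.update (projF k j v) ⟨i, hij⟩ x ∈ Fintype.piFinset X := by
        rw [Fintype.mem_piFinset]
        intro m
        rcases eq_or_ne m ⟨i, hij⟩ with rfl | hne
        · simpa [Function.update] using hx
        · rw [Function.update_of_ne hne]
          exact Fintype.mem_piFinset.mp hv' m
      rw [← hproj, Finset.mem_image] at hu
      obtain ⟨w, hw, hwe⟩ := hu
      have hcoord : ∀ (m : ℕ) (hm : m < j), w ⟨m, lt_of_lt_of_le hm hj⟩ =
          Function.update (projF k j v) ⟨i, hij⟩ x ⟨m, hm⟩ := by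
        intro m hm
        have := congrFun hwe ⟨m, hm⟩
        simpa [projF, lt_of_lt_of_le hm hj] using this
      have hgw : projF k (i + 1) w = g x := by
        funext m
        rcases Nat.lt_or_ge m.1 i with hmi | hmi
        · have hmj : m.1 < j := lt_trans hmi hij
          have h1 := hcoord m.1 hmj
          have hne : (⟨m.1, hmj⟩ : Fin j) ≠ ⟨i, hij⟩ := by
            simp [Fin.ext_iff]; omega
          rw [Function.update_of_ne hne] at h1
          simp only [projF, hg, dif_pos (lt_of_lt_of_le hmj hj), dif_pos hmi]
          simpa [projF, lt_of_lt_of_le hmj hj] using h1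
        · have hmi' : m.1 = i := by omega
          have h1 := hcoord m.1 (by omega)
          have heq : (⟨m.1, by omega⟩ : Fin j) = ⟨i, hij⟩ := by
            simp [Fin.ext_iff, hmi']
          rw [heq, Function.update_self] at h1
          simp only [projF, hg, dif_pos (show m.1 < k by omega), dif_neg (by omega : ¬ m.1 < i)]
          exact h1
      rw [Finset.mem_filter]
      constructor
      · rw [hS, ← hgw]; exact Finset.mem_image_of_mem _ hw
      · funext m
        simp only [hf, hg, projF, dif_pos m.2, dif_pos (lt_trans m.2 hik)]
    calc d + 1 ≤ (X ⟨i, hij⟩).card := hX ⟨i, hij⟩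
      _ = ((X ⟨i, hij⟩).image g).card := (Finset.card_image_of_injOn hginj).symm
      _ ≤ _ := Finset.card_le_card (by
          intro q hq
          rw [Finset.mem_image] at hq
          obtain ⟨x, hx, rfl⟩ := hq
          exact hgmem x hx)
  exact Finset.mul_card_image_le_card_of_maps_to hmaps (d + 1) key
end

section
/- Soundness of the Taylor form enclosure in one variable: let F be a real polynomial, B = [a,b] a closed interval with midpoint c, m ≥ 1, and let J be an interval containing {F^{(m)}(ξ) | ξ ∈ B}. Define T_m(F, B) = F(c) + F'(c)(B−c) + ⋯ + F^{(m−1)}(c)(B−c)^{m−1}/(m−1)! + J·(B−c)^m/m!, computed in interval arithmetic. Then F(x) ∈ T_m(F, B) for every x ∈ B. In particular, 0 ∉ T_m(F, B) implies F has no zero in B. -/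
open Set Polynomial

private lemma poly_contDiff (F : Polynomial ℝ) (n : ℕ∞) : ContDiff ℝ n fun y => F.eval y := by
  induction F using Polynomial.induction_on' with
  | add p q hp hq => simpa [Polynomial.eval_add] using hp.add hq
  | monomial k c =>
      simp only [Polynomial.eval_monomial]
      exact contDiff_const.mul (contDiff_id.pow k)

private lemma poly_iterDerivWithin (F : Polynomial ℝ) {u v : ℝ} (huv : u < v) (n : ℕ) :
    ∀ x ∈ Set.Icc u v,
      iteratedDerivWithin n (fun y => F.eval y) (Set.Icc u v) x
        = (Polynomial.derivative^[n] F).eval x := by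
  induction n with
  | zero => intro x hx; simp
  | succ n ih =>
    intro x hx
    have hu : UniqueDiffOn ℝ (Set.Icc u v) := uniqueDiffOn_Icc huv
    rw [iteratedDerivWithin_succ,
      derivWithin_congr (fun y hy => ih y hy) (ih x hx),
      Function.iterate_succ_apply']
    exact (((Polynomial.derivative^[n] F).hasDerivAt x).hasDerivWithinAt).derivWithin (hu x hx)

private lemma poly_taylor_lt (F : Polynomial ℝ) (c x : ℝ) (m : ℕ) (hm : 1 ≤ m) (h : c < x) :
    ∃ ξ ∈ Set.Icc c x,
      F.eval x = (∑ i ∈ Finset.range m,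
          (Polynomial.derivative^[i] F).eval c / (Nat.factorial i) * (x - c) ^ i)
        + (Polynomial.derivative^[m] F).eval ξ * (x - c) ^ m / (Nat.factorial m) := by
  obtain ⟨n, rfl⟩ : ∃ n, m = n + 1 := ⟨m - 1, (Nat.succ_pred_eq_of_pos hm).symm⟩
  have hf : ContDiffOn ℝ n (fun y => F.eval y) (Set.Icc c x) :=
    (poly_contDiff F n).contDiffOn
  have hf' : DifferentiableOn ℝ
      (iteratedDerivWithin n (fun y => F.eval y) (Set.Icc c x)) (Set.Ioo c x) := by
    apply DifferentiableOn.congr (f := fun y => (Polynomial.derivative^[n] F).eval y)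
    · exact (Polynomial.differentiable _).differentiableOn
    · intro y hy; exact poly_iterDerivWithin F h n y (Set.Ioo_subset_Icc_self hy)
  obtain ⟨ξ, hξ, heq⟩ := taylor_mean_remainder_lagrange h.ne
    (by rwa [Set.uIcc_of_le h.le]) (by rwa [Set.uIcc_of_le h.le, Set.uIoo_of_le h.le])
  rw [Set.uIoo_of_le h.le] at hξ
  rw [Set.uIcc_of_le h.le] at heq
  refine ⟨ξ, Set.Ioo_subset_Icc_self hξ, ?_⟩
  rw [poly_iterDerivWithin F h (n + 1) ξ (Set.Ioo_subset_Icc_self hξ),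
    taylor_within_apply] at heq
  have h2 : ∀ i ∈ Finset.range (n + 1),
      ((i.factorial : ℝ)⁻¹ * (x - c) ^ i) • iteratedDerivWithin i (fun y => F.eval y) (Set.Icc c x) c
        = (Polynomial.derivative^[i] F).eval c / (Nat.factorial i) * (x - c) ^ i := by
    intro i _
    rw [poly_iterDerivWithin F h i c (Set.left_mem_Icc.2 h.le), smul_eq_mul]
    ring
  rw [Finset.sum_congr rfl h2] at heq
  linarith [heq]

private lemma refl_iter (F : Polynomial ℝ) (c : ℝ) (i : ℕ) :
    Polynomial.derivative^[i] (F.comp (Polynomial.C (2 * c) - Polynomial.X))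
      = Polynomial.C ((-1 : ℝ) ^ i) *
        ((Polynomial.derivative^[i] F).comp (Polynomial.C (2 * c) - Polynomial.X)) := by
  induction i with
  | zero => simp
  | succ i ih =>
    rw [Function.iterate_succ_apply', ih, Polynomial.derivative_C_mul,
      Polynomial.derivative_comp, Function.iterate_succ_apply']
    simp [pow_succ, Polynomial.derivative_sub]

private lemma poly_taylor (F : Polynomial ℝ) (c x : ℝ) (m : ℕ) (hm : 1 ≤ m) :
    ∃ ξ ∈ Set.uIcc c x,
      F.eval x = (∑ i ∈ Finset.range m,
          (Polynomial.derivative^[i] F).eval c / (Nat.factorial i) * (x - c) ^ i)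
        + (Polynomial.derivative^[m] F).eval ξ * (x - c) ^ m / (Nat.factorial m) := by
  rcases lt_trichotomy c x with h | h | h
  · obtain ⟨ξ, hξ, heq⟩ := poly_taylor_lt F c x m hm h
    exact ⟨ξ, by rwa [Set.uIcc_of_le h.le], heq⟩
  · subst h
    refine ⟨c, Set.left_mem_uIcc, ?_⟩
    rw [Finset.sum_eq_single_of_mem 0 (Finset.mem_range.2 hm)
      (fun i _ hi => by simp [zero_pow hi])]
    simp [zero_pow (by omega : m ≠ 0)]
  · -- reflect: apply the previous case to G(y) = F(2c - y)
    set G := F.comp (Polynomial.C (2 * c) - Polynomial.X) with hG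
    have h' : c < 2 * c - x := by linarith
    obtain ⟨ξ', hξ', heq⟩ := poly_taylor_lt G c (2 * c - x) m hm h'
    have hGval : ∀ i y, (Polynomial.derivative^[i] G).eval y
        = (-1 : ℝ) ^ i * (Polynomial.derivative^[i] F).eval (2 * c - y) := by
      intro i y
      rw [hG, refl_iter]
      simp [Polynomial.eval_comp]
    refine ⟨2 * c - ξ', ?_, ?_⟩
    · rw [Set.uIcc_of_ge h.le]
      constructor <;> [linarith [hξ'.2]; linarith [hξ'.1]]
    · have hx : G.eval (2 * c - x) = F.eval x := by
        rw [hG]; simp [Polynomial.eval_comp]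
      rw [hx] at heq
      have hsum : ∀ i ∈ Finset.range m,
          (Polynomial.derivative^[i] G).eval c / (Nat.factorial i) * (2 * c - x - c) ^ i
            = (Polynomial.derivative^[i] F).eval c / (Nat.factorial i) * (x - c) ^ i := by
        intro i _
        have key : ((-1 : ℝ)) ^ i * (2 * c - x - c) ^ i = (x - c) ^ i := by
          rw [← mul_pow]; ring_nf
        rw [hGval, show (2 * c - c : ℝ) = c from by ring]
        rw [show ((-1 : ℝ)) ^ i * (Polynomial.derivative^[i] F).eval c / (Nat.factorial i)
              * (2 * c - x - c) ^ i
            = (Polynomial.derivative^[i] F).eval c / (Nat.factorial i)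
              * (((-1 : ℝ)) ^ i * (2 * c - x - c) ^ i) from by ring, key]
      rw [Finset.sum_congr rfl hsum] at heq
      have hrem : (Polynomial.derivative^[m] G).eval ξ' * (2 * c - x - c) ^ m
          = (Polynomial.derivative^[m] F).eval (2 * c - ξ') * (x - c) ^ m := by
        have key : ((-1 : ℝ)) ^ m * (2 * c - x - c) ^ m = (x - c) ^ m := by
          rw [← mul_pow]; ring_nf
        rw [hGval, show ((-1 : ℝ)) ^ m * (Polynomial.derivative^[m] F).eval (2 * c - ξ')
              * (2 * c - x - c) ^ m
            = (Polynomial.derivative^[m] F).eval (2 * c - ξ')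
              * (((-1 : ℝ)) ^ m * (2 * c - x - c) ^ m) from by ring, key]
      rw [hrem] at heq
      exact heq

/-- soundness of the Taylor form enclosure in one variable. If `J`
encloses the `m`-th derivative of the real polynomial `F` on `B = [a,b]` with
midpoint `c`, and `T` is the interval obtained by computing
`F(c) + F'(c)(B−c) + ⋯ + F^{(m−1)}(c)(B−c)^{m−1}/(m−1)! + J·(B−c)^m/m!` in
interval arithmetic (so that `T` contains all pointwise values), then
`F(x) ∈ T` for all `x ∈ B`; in particular `0 ∉ T` implies `F` has no zero in `B`. -/
theorem taylor_form_enclosure_sound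
    (F : Polynomial ℝ) (a b : ℝ) (hab : a ≤ b) (m : ℕ) (hm : 1 ≤ m)
    (c : ℝ) (hc : c = (a + b) / 2) (J T : Set ℝ)
    (hJ : ∀ ξ ∈ Set.Icc a b, (Polynomial.derivative^[m] F).eval ξ ∈ J)
    (hT : ∀ t ∈ Set.Icc (a - c) (b - c), ∀ r ∈ J,
      (∑ i ∈ Finset.range m,
          (Polynomial.derivative^[i] F).eval c / (Nat.factorial i) * t ^ i)
        + r * t ^ m / (Nat.factorial m) ∈ T) :
    (∀ x ∈ Set.Icc a b, F.eval x ∈ T) ∧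
    (0 ∉ T → ∀ x ∈ Set.Icc a b, F.eval x ≠ 0) := by
  have hcab : c ∈ Set.Icc a b := by constructor <;> (rw [hc]; linarith)
  have main : ∀ x ∈ Set.Icc a b, F.eval x ∈ T := by
    intro x hx
    obtain ⟨ξ, hξ, heq⟩ := poly_taylor F c x m hm
    have hξab : ξ ∈ Set.Icc a b := by
      rw [Set.uIcc] at hξ
      exact Set.Icc_subset_Icc (le_min hcab.1 hx.1) (max_le hcab.2 hx.2) hξ
    have ht : x - c ∈ Set.Icc (a - c) (b - c) :=
      ⟨by linarith [hx.1], by linarith [hx.2]⟩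
    have := hT (x - c) ht _ (hJ ξ hξab)
    rwa [heq]
  exact ⟨main, fun h0 x hx hFx => h0 (hFx ▸ main x hx)⟩
end

section
/- Interval Newton fixed-point criterion in one variable: let F : ℝ → ℝ be continuously differentiable, B = [a,b] with midpoint c, and let S be an interval with F'(x) ∈ S for all x ∈ B and 0 ∉ S. If the interval N(B) = c − F(c)/S (computed with interval arithmetic) satisfies N(B) ⊆ B, then F has a zero in B. -/
/-- interval Newton fixed-point criterion in one variable. If `F` is
continuously differentiable on `B = [a,b]` with midpoint `c`, `S` encloses `F'` on
`B`, `0 ∉ S`, and the interval Newton image `N(B) = c − F(c)/S` is contained in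
`B`, then `F` has a zero in `B`. -/
theorem interval_newton_existence
    (F : ℝ → ℝ) (hF : ContDiff ℝ 1 F)
    (a b : ℝ) (hab : a ≤ b) (c : ℝ) (hc : c = (a + b) / 2)
    (S : Set ℝ)
    (hS : ∀ x ∈ Set.Icc a b, deriv F x ∈ S)
    (h0 : (0 : ℝ) ∉ S)
    (hN : {y : ℝ | ∃ s ∈ S, y = c - F c / s} ⊆ Set.Icc a b) :
    ∃ x ∈ Set.Icc a b, F x = 0 := by
  have hcF : Continuous F := hF.continuous
  have hcd : Continuous (deriv F) := hF.continuous_deriv le_rfl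
  have hdiff : Differentiable ℝ F := hF.differentiable one_ne_zero
  have hcmem : c ∈ Set.Icc a b := by
    constructor <;> (rw [hc]; linarith)
  -- if F c = 0 we are done
  rcases eq_or_ne (F c) 0 with h | hFc
  · exact ⟨c, hcmem, h⟩
  -- a < b
  have haltb : a < b := by
    rcases lt_or_eq_of_le hab with h | h
    · exact h
    · exfalso
      have hca : c = a := by rw [hc]; linarith
      have hs : deriv F c ∈ S := hS c hcmem
      have hsne : deriv F c ≠ 0 := fun h' => h0 (h' ▸ hs)
      have hmem := hN ⟨deriv F c, hs, rfl⟩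
      simp only [Set.mem_Icc] at hmem
      have hz : F c / deriv F c = 0 := by
        linarith [hmem.1, hmem.2]
      rcases div_eq_zero_iff.mp hz with h' | h'
      · exact hFc h'
      · exact hsne h'
  have hac : a < c := by rw [hc]; linarith
  have hcb : c < b := by rw [hc]; linarith
  -- deriv never zero, hence constant sign on [a,b]
  have hne : ∀ x ∈ Set.Icc a b, deriv F x ≠ 0 := fun x hx h =>
    h0 (h ▸ hS x hx)
  have hsign : (∀ x ∈ Set.Icc a b, 0 < deriv F x) ∨
      (∀ x ∈ Set.Icc a b, deriv F x < 0) := by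
    by_contra h
    push_neg at h
    obtain ⟨⟨x, hx, hx0⟩, ⟨y, hy, hy0⟩⟩ := h
    have hx0' : deriv F x < 0 := lt_of_le_of_ne hx0 (hne x hx)
    have hy0' : 0 < deriv F y := lt_of_le_of_ne hy0 (Ne.symm (hne y hy))
    have hsub : Set.uIcc x y ⊆ Set.Icc a b := Set.uIcc_subset_Icc hx hy
    have h0m : (0 : ℝ) ∈ Set.uIcc (deriv F x) (deriv F y) :=
      Set.mem_uIcc.2 (Or.inl ⟨le_of_lt hx0', le_of_lt hy0'⟩)
    obtain ⟨z, hz, hz0⟩ := intermediate_value_uIcc (hcd.continuousOn) h0m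
    exact hne z (hsub hz) hz0
  -- MVT helper on [u,v] ⊆ [a,b]
  have mvt : ∀ u v : ℝ, u < v → a ≤ u → v ≤ b →
      ∃ ξ ∈ Set.Icc a b, F v - F u = deriv F ξ * (v - u) := by
    intro u v huv hau hvb
    obtain ⟨ξ, hξ, hξs⟩ := exists_hasDerivAt_eq_slope F (deriv F) huv
      (hcF.continuousOn) (fun x _ => (hdiff x).hasDerivAt)
    refine ⟨ξ, ⟨le_trans hau (le_of_lt hξ.1),
      le_trans (le_of_lt hξ.2) hvb⟩, ?_⟩
    rw [hξs, div_mul_cancel₀ _ (sub_ne_zero.2 (ne_of_gt huv))]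
  -- produce u v with F u ≤ 0 ≤ F v
  have key : ∃ u ∈ Set.Icc a b, ∃ v ∈ Set.Icc a b, F u ≤ 0 ∧ 0 ≤ F v := by
    have hamem : a ∈ Set.Icc a b := ⟨le_rfl, hab⟩
    have hbmem : b ∈ Set.Icc a b := ⟨hab, le_rfl⟩
    rcases hFc.lt_or_gt with hFneg | hFpos
    · -- F c < 0
      rcases hsign with hpos | hneg
      · -- deriv > 0 : F b ≥ 0
        obtain ⟨ξ, hξ, heq⟩ := mvt c b hcb (le_of_lt hac) le_rfl
        set s := deriv F ξ with hsdef
        have hspos : 0 < s := hpos ξ hξ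
        have h1 : c - F c / s ≤ b := (hN ⟨s, hS ξ hξ, rfl⟩).2
        have h2 : (c - b) * s ≤ F c := (le_div_iff₀ hspos).mp (by linarith)
        exact ⟨c, hcmem, b, hbmem, le_of_lt hFneg, by nlinarith⟩
      · -- deriv < 0 : F a ≥ 0
        obtain ⟨ξ, hξ, heq⟩ := mvt a c hac le_rfl (le_of_lt hcb)
        set s := deriv F ξ with hsdef
        have hsneg : s < 0 := hneg ξ hξ
        have h1 : a ≤ c - F c / s := (hN ⟨s, hS ξ hξ, rfl⟩).1
        have h2 : (c - a) * s ≤ F c := (div_le_iff_of_neg hsneg).mp (by linarith)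
        exact ⟨c, hcmem, a, hamem, le_of_lt hFneg, by nlinarith⟩
    · -- F c > 0
      rcases hsign with hpos | hneg
      · -- deriv > 0 : F a ≤ 0
        obtain ⟨ξ, hξ, heq⟩ := mvt a c hac le_rfl (le_of_lt hcb)
        set s := deriv F ξ with hsdef
        have hspos : 0 < s := hpos ξ hξ
        have h1 : a ≤ c - F c / s := (hN ⟨s, hS ξ hξ, rfl⟩).1
        have h2 : F c ≤ (c - a) * s := (div_le_iff₀ hspos).mp (by linarith)
        exact ⟨a, hamem, c, hcmem, by nlinarith, le_of_lt hFpos⟩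
      · -- deriv < 0 : F b ≤ 0
        obtain ⟨ξ, hξ, heq⟩ := mvt c b hcb (le_of_lt hac) le_rfl
        set s := deriv F ξ with hsdef
        have hsneg : s < 0 := hneg ξ hξ
        have h1 : c - F c / s ≤ b := (hN ⟨s, hS ξ hξ, rfl⟩).2
        have h2 : F c ≤ (c - b) * s := (le_div_iff_of_neg hsneg).mp (by linarith)
        exact ⟨b, hbmem, c, hcmem, by nlinarith, le_of_lt hFpos⟩
  obtain ⟨u, hu, v, hv, hFu, hFv⟩ := key
  have h0m : (0 : ℝ) ∈ Set.uIcc (F u) (F v) := Set.mem_uIcc.2 (Or.inl ⟨hFu, hFv⟩)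
  obtain ⟨x, hx, hx0⟩ := intermediate_value_uIcc (hcF.continuousOn) h0m
  exact ⟨x, Set.uIcc_subset_Icc hu hv hx, hx0⟩
end
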